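/- arXiv:0711.2675 — 8 statements merged into one kernel-verified Lean document; each statement's English description precedes it below -/
import Mathlib

section
/- The sequence defined by u_0 = 1/2 and the recurrence (n+1)·u_k = k·u_{k-1} + (n-k-1)·u_{k+1} for k = 1, ..., n-1 (with u_n = 0) satisfies the identity i·u_{i-1} = n·u_{n-1} + (n-i)·u_i for all i = 1, ..., n. -/
theorem stmt0 (n : ℕ) (hn : 2 ≤ n) (u : ℕ → ℝ)
    (h0 : u 0 = 1/2) (hend : u n = 0)
    (hrec : ∀ k, 1 ≤ k → k ≤ n - 1 →
      ((n : ℝ) + 1) * u k = (k : ℝ) * u (k - 1) + ((n : ℝ) - k - 1) * u (k + 1)) :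
    ∀ i, 1 ≤ i → i ≤ n →
      (i : ℝ) * u (i - 1) = (n : ℝ) * u (n - 1) + ((n : ℝ) - i) * u i := by
  have key : ∀ d i, 1 ≤ i → i + d = n →
      (i : ℝ) * u (i - 1) = (n : ℝ) * u (n - 1) + ((n : ℝ) - i) * u i := by
    intro d
    induction d with
    | zero =>
      intro i hi1 hin
      simp only [Nat.add_zero] at hin
      subst hin
      rw [hend]
      ring
    | succ d ih =>
      intro i hi1 hin
      have hile : i ≤ n - 1 := by omega
      have h := hrec i hi1 hile
      have ih' := ih (i + 1) (by omega) (by omega)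
      have hsimp : i + 1 - 1 = i := by omega
      rw [hsimp] at ih'
      push_cast at ih' ⊢
      linarith
  intro i hi1 hin
  exact key (n - i) i hi1 (by omega)
end

section
/- The sequence z_i := (i+1)(i+2)···(n-1)·u_i, where u satisfies i·u_{i-1} = n·u_{n-1} + (n-i)·u_i for 1 ≤ i ≤ n with u_{n-1} = c, satisfies z_{n-j-1} = c·j!·∑_{l=0}^{j} C(n, j-l) for all j = 0, 1, ..., n-1. -/
lemma aux_prod (n : ℕ) : ∀ j, j + 1 ≤ n →
    n * ∏ m ∈ Finset.Icc (n - j) (n - 1), m = Nat.descFactorial n (j + 1) := by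
  intro j
  induction j with
  | zero =>
    intro h
    rw [Finset.Icc_eq_empty (by omega)]
    simp [Nat.descFactorial]
  | succ j ih =>
    intro h
    have h1 : n - (j + 1) = n - j - 1 := by omega
    have h2 : Finset.Icc (n - j - 1) (n - 1) =
        insert (n - j - 1) (Finset.Icc (n - j) (n - 1)) := by
      rw [← Finset.Ioc_insert_left (by omega)]
      congr 1
      rw [← Finset.Icc_add_one_left_eq_Ioc]
      congr 1
      omega
    rw [h1, h2, Finset.prod_insert (by simp [Finset.mem_Icc]; omega)]
    rw [Nat.descFactorial_succ, ← ih (by omega), h1]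
    ring

theorem stmt3 (n : ℕ) (hn : 2 ≤ n) (c : ℝ) (u : ℕ → ℝ)
    (huc : u (n - 1) = c)
    (hrec : ∀ i, 1 ≤ i → i ≤ n - 1 →
      (i : ℝ) * u (i - 1) = (n : ℝ) * c + ((n : ℝ) - i) * u i)
    (z : ℕ → ℝ)
    (hz : ∀ i, z i = (∏ m ∈ Finset.Icc (i + 1) (n - 1), (m : ℝ)) * u i) :
    ∀ j, j ≤ n - 1 →
      z (n - j - 1) = c * (j.factorial : ℝ) *
        ∑ l ∈ Finset.range (j + 1), (n.choose (j - l) : ℝ) := by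
  intro j
  induction j with
  | zero =>
    intro _
    rw [hz, Finset.Icc_eq_empty (by omega)]
    simp [huc]
  | succ j ih =>
    intro hj
    have hj' : j ≤ n - 1 := by omega
    have ih' := ih hj'
    set i := n - j - 1 with hi
    have hi1 : 1 ≤ i := by omega
    have hi2 : i ≤ n - 1 := by omega
    have hr := hrec i hi1 hi2
    have hcast : (n : ℝ) - (i : ℝ) = (j : ℝ) + 1 := by
      have hh : i + (j + 1) = n := by omega
      have hh2 : ((i + (j + 1) : ℕ) : ℝ) = (n : ℝ) := by rw [hh]
      push_cast at hh2
      linarith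
    rw [hcast] at hr
    have hidx : n - (j + 1) - 1 = i - 1 := by omega
    rw [hidx, hz (i - 1)]
    have hi3 : i - 1 + 1 = i := by omega
    rw [hi3]
    have hsplit : Finset.Icc i (n - 1) = insert i (Finset.Icc (i + 1) (n - 1)) := by
      rw [← Finset.Ioc_insert_left hi2, ← Finset.Icc_add_one_left_eq_Ioc]
    rw [hsplit, Finset.prod_insert (by simp)]
    set P := ∏ m ∈ Finset.Icc (i + 1) (n - 1), (m : ℝ) with hP
    have key : (i : ℝ) * P * u (i - 1) = P * ((n : ℝ) * c + ((j : ℝ) + 1) * u i) := by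
      rw [← hr]; ring
    rw [key]
    -- P * n = (j+1)! * choose n (j+1)
    have hPn : P * (n : ℝ) = ((j + 1).factorial : ℝ) * (n.choose (j + 1) : ℝ) := by
      have hnat := aux_prod n j (by omega)
      have : i + 1 = n - j := by omega
      rw [hP, this]
      have hc : (↑(n * ∏ m ∈ Finset.Icc (n - j) (n - 1), m) : ℝ)
          = (↑(Nat.descFactorial n (j + 1)) : ℝ) := by exact_mod_cast hnat
      rw [Nat.descFactorial_eq_factorial_mul_choose] at hc
      push_cast at hc
      linarith
    have hzi : P * u i = c * (j.factorial : ℝ) *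
        ∑ l ∈ Finset.range (j + 1), (n.choose (j - l) : ℝ) := by
      rw [← ih', hz i]
    have hsum : ∑ l ∈ Finset.range (j + 1 + 1), (n.choose (j + 1 - l) : ℝ)
        = (n.choose (j + 1) : ℝ) + ∑ l ∈ Finset.range (j + 1), (n.choose (j - l) : ℝ) := by
      have h0 : ∑ l ∈ Finset.range (j + 1), (n.choose (j + 1 - (l + 1)) : ℝ)
          = ∑ l ∈ Finset.range (j + 1), (n.choose (j - l) : ℝ) :=
        Finset.sum_congr rfl fun l _ => by
          rw [show j + 1 - (l + 1) = j - l from by omega]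
      rw [Finset.sum_range_succ', h0, Nat.sub_zero]
      ring
    rw [hsum]
    have hfac : ((j + 1).factorial : ℝ) = ((j : ℝ) + 1) * (j.factorial : ℝ) := by
      push_cast [Nat.factorial_succ]; ring
    rw [hfac] at hPn ⊢
    linear_combination c * hPn + ((j : ℝ) + 1) * hzi
end

section
/- The unique solution of the system u_0 = 1/2, u_n = 0, (n+1)·u_k = k·u_{k-1} + (n-k-1)·u_{k+1} for 1 ≤ k ≤ n-1 is given by u_k = (∑_{i=k+1}^{n} C(n,i)) / (C(n-1,k)·(2^{n+1} - 2)) for k = 0, 1, ..., n-1. -/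
theorem stmt4 (n : ℕ) (hn : 2 ≤ n) (u : ℕ → ℝ)
    (h0 : u 0 = 1/2) (hend : u n = 0)
    (hrec : ∀ k, 1 ≤ k → k ≤ n - 1 →
      ((n : ℝ) + 1) * u k = (k : ℝ) * u (k - 1) + ((n : ℝ) - k - 1) * u (k + 1)) :
    ∀ k, k ≤ n - 1 →
      u k = (∑ i ∈ Finset.Icc (k + 1) n, (n.choose i : ℝ)) /
        (((n - 1).choose k : ℝ) * (2 ^ (n + 1) - 2)) := by
  obtain ⟨m, rfl⟩ : ∃ m, n = m + 2 := ⟨n - 2, by omega⟩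
  have hs21 : m + 2 - 1 = m + 1 := by omega
  rw [hs21] at hrec ⊢
  set S : ℕ → ℝ := fun k => ∑ i ∈ Finset.Icc (k + 1) (m + 2), ((m + 2).choose i : ℝ)
    with hSdef
  set f : ℕ → ℝ := fun k => ((m + 1).choose k : ℝ) * u k with hfdef
  obtain ⟨B, hBmul⟩ : ∃ B : ℝ, B * ((m : ℝ) + 2) = u 0 - ((m : ℝ) + 1) * u 1 :=
    ⟨(u 0 - ((m : ℝ) + 1) * u 1) / ((m : ℝ) + 2), by field_simp⟩
  obtain ⟨A, hAdef⟩ : ∃ A : ℝ, A = u 0 - B * (2 ^ (m + 2) - 1) := ⟨_, rfl⟩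
  have hSstep : ∀ k, k + 1 ≤ m + 2 → S k = ((m + 2).choose (k + 1) : ℝ) + S (k + 1) := by
    intro k hk
    have hins : Finset.Icc (k + 1) (m + 2) = insert (k + 1) (Finset.Icc (k + 1 + 1) (m + 2)) := by
      ext x; simp only [Finset.mem_Icc, Finset.mem_insert]; omega
    simp only [hSdef]
    rw [hins, Finset.sum_insert (by simp)]
  have hS0 : S 0 = 2 ^ (m + 2) - 1 := by
    have h : (∑ i ∈ Finset.range (m + 3), ((m + 2).choose i : ℝ)) = 2 ^ (m + 2) := by
      exact_mod_cast congrArg (Nat.cast : ℕ → ℝ) (Nat.sum_range_choose (m + 2))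
    have hr : Finset.range (m + 3) = insert 0 (Finset.Icc 1 (m + 2)) := by
      ext x; simp only [Finset.mem_range, Finset.mem_Icc, Finset.mem_insert]; omega
    rw [hr, Finset.sum_insert (by simp)] at h
    simp only [hSdef]
    simp only [Nat.choose_zero_right, Nat.cast_one] at h
    have h01 : (0 : ℕ) + 1 = 1 := rfl
    rw [h01]
    linarith
  have h11 : m + 1 + 1 = m + 2 := by omega
  have hStop : S (m + 1) = 1 := by
    simp [hSdef, h11]
  have hchm2 : (m + 2).choose (m + 1) = m + 2 := Nat.choose_succ_self_right (m + 1)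
  have hSm : S m = (m : ℝ) + 3 := by
    rw [hSstep m (by omega), hStop, hchm2]
    push_cast; ring
  have main2 : ∀ j, j ≤ m → f j = A + B * S j ∧ f (j + 1) = A + B * S (j + 1) := by
    intro j hj
    induction j with
    | zero =>
      constructor
      · simp [hfdef, hAdef, hS0]
      · have h1 : S 0 = ((m : ℝ) + 2) + S 1 := by
          have h := hSstep 0 (by omega)
          norm_num at h
          push_cast at h
          linarith
        norm_num [hfdef, Nat.choose_one_right, hAdef]
        push_cast
        linear_combination hBmul + B * h1 - B * hS0
    | succ j ih =>
      obtain ⟨hfj, hfj1⟩ := ih (by omega)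
      refine ⟨hfj1, ?_⟩
      have hr := hrec (j + 1) (by omega) (by omega)
      push_cast [Nat.add_sub_cancel] at hr
      have c1 : ((m + 1).choose (j + 1) : ℝ) * ((j : ℝ) + 1) =
          ((m + 1).choose j : ℝ) * ((m : ℝ) + 1 - j) := by
        have hc := congrArg (Nat.cast : ℕ → ℝ) (Nat.choose_succ_right_eq (m + 1) j)
        push_cast [Nat.cast_sub (by omega : j ≤ m + 1)] at hc
        linarith
      have c2 : ((m + 1).choose (j + 2) : ℝ) * ((j : ℝ) + 2) =
          ((m + 1).choose (j + 1) : ℝ) * ((m : ℝ) - j) := by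
        have hc := congrArg (Nat.cast : ℕ → ℝ) (Nat.choose_succ_right_eq (m + 1) (j + 1))
        push_cast [Nat.cast_sub (show j ≤ m by omega), Nat.cast_sub (show j + 1 ≤ m + 1 by omega)] at hc
        linarith
      have c3 : ((m + 2).choose (j + 2) : ℝ) * ((j : ℝ) + 2) =
          ((m + 2).choose (j + 1) : ℝ) * ((m : ℝ) + 1 - j) := by
        have hc := congrArg (Nat.cast : ℕ → ℝ) (Nat.choose_succ_right_eq (m + 2) (j + 1))
        push_cast [Nat.cast_sub (show j ≤ m + 1 by omega), Nat.cast_sub (show j + 1 ≤ m + 2 by omega)] at hc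
        linarith
      have s1 : S j = ((m + 2).choose (j + 1) : ℝ) + S (j + 1) := hSstep j (by omega)
      have s2 : S (j + 1) = ((m + 2).choose (j + 2) : ℝ) + S (j + 2) := hSstep (j + 1) (by omega)
      have hE : ((j : ℝ) + 2) * f (j + 2) =
          ((m : ℝ) + 3) * f (j + 1) - ((m : ℝ) + 1 - j) * f j := by
        simp only [hfdef]
        linear_combination u (j + 2) * c2 - u j * c1 - (((m + 1).choose (j + 1) : ℝ)) * hr
      have hj2 : ((j : ℝ) + 2) ≠ 0 := by positivity
      have key : ((j : ℝ) + 2) * f (j + 2) = ((j : ℝ) + 2) * (A + B * S (j + 2)) := by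
        linear_combination hE + ((m : ℝ) + 3) * hfj1 - ((m : ℝ) + 1 - (j : ℝ)) * hfj +
          B * (((j : ℝ) + 2) * s2 - ((m : ℝ) + 1 - (j : ℝ)) * s1 + c3)
      exact mul_left_cancel₀ hj2 key
  have main : ∀ k, k ≤ m + 1 → f k = A + B * S k := by
    intro k hk
    match k, hk with
    | 0, _ => exact (main2 0 (by omega)).1
    | (j+1), hk => exact (main2 j (by omega)).2
  have hA0 : A = 0 := by
    have h1 := main (m + 1) le_rfl
    have h2 := main m (by omega)
    have hr := hrec (m + 1) (by omega) (by omega)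
    push_cast [Nat.add_sub_cancel] at hr
    have hfm1 : f (m + 1) = u (m + 1) := by simp [hfdef]
    have hfm : f m = ((m : ℝ) + 1) * u m := by
      simp [hfdef, Nat.choose_succ_self_right]
    rw [hStop, hfm1] at h1
    rw [hSm, hfm] at h2
    have key : ((m : ℝ) + 3) * u (m + 1) = ((m : ℝ) + 1) * u m := by
      linear_combination hr
    have h3 : ((m : ℝ) + 2) * A = 0 := by
      linear_combination key - ((m : ℝ) + 3) * h1 + h2
    rcases mul_eq_zero.mp h3 with h | h
    · exfalso; have hp : ((m : ℝ) + 2) > 0 := by positivity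
      linarith
    · exact h
  have hBval : B * ((2 : ℝ) ^ (m + 2) - 1) = 1 / 2 := by
    have h := main 0 (by omega)
    rw [hS0, hA0] at h
    simp only [hfdef, Nat.choose_zero_right, Nat.cast_one, one_mul, h0, zero_add] at h
    linarith
  intro k hk
  have hm := main k hk
  rw [hA0, zero_add] at hm
  have hcne : (((m + 1).choose k : ℝ)) ≠ 0 := by
    have h := Nat.choose_pos (by omega : k ≤ m + 1)
    positivity
  have hpow : (2 : ℝ) ^ (m + 2) ≥ 2 ^ 1 := by
    apply pow_le_pow_right₀ (by norm_num) (by omega)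
  have hpne : ((2 : ℝ) ^ (m + 2 + 1) - 2) ≠ 0 := by
    have : (2 : ℝ) ^ (m + 2 + 1) = 2 * 2 ^ (m + 2) := by ring
    rw [this]
    norm_num at hpow ⊢
    nlinarith
  rw [eq_div_iff (mul_ne_zero hcne hpne)]
  have hSk : (∑ i ∈ Finset.Icc (k + 1) (m + 2), ((m + 2).choose i : ℝ)) = S k := rfl
  rw [hSk]
  have hfk : ((m + 1).choose k : ℝ) * u k = f k := rfl
  calc u k * (((m + 1).choose k : ℝ) * ((2 : ℝ) ^ (m + 2 + 1) - 2))
      = (((m + 1).choose k : ℝ) * u k) * ((2 : ℝ) ^ (m + 2 + 1) - 2) := by ring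
    _ = (B * S k) * ((2 : ℝ) ^ (m + 2 + 1) - 2) := by rw [hfk, hm]
    _ = S k * (2 * (B * ((2 : ℝ) ^ (m + 2) - 1))) := by ring
    _ = S k := by rw [hBval]; ring
end

section
/- Define w_k = 1/2 − (∑_{i=k+1}^{n} C(n,i)) / (2(2^n − 1)·C(n-1,k)) for k = 0, ..., n-1. Then w_0 = 0, (n+1)·w_{n-1} = (n-1)·w_{n-2} + 1, and (n+1)·w_k = k·w_{k-1} + (n-k-1)·w_{k+1} + 1 for 1 ≤ k ≤ n-2. -/
lemma sum_Icc_choose_split (n a : ℕ) (h : a ≤ n) :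
    ∑ i ∈ Finset.Icc a n, (n.choose i : ℝ) =
      (n.choose a : ℝ) + ∑ i ∈ Finset.Icc (a + 1) n, (n.choose i : ℝ) := by
  rw [Finset.Icc_eq_cons_Ioc h, Finset.sum_cons, ← Finset.Icc_add_one_left_eq_Ioc]

theorem stmt5 (n : ℕ) (hn : 2 ≤ n) (w : ℕ → ℝ)
    (hw : ∀ k, k ≤ n - 1 →
      w k = 1/2 - (∑ i ∈ Finset.Icc (k + 1) n, (n.choose i : ℝ)) /
        (2 * (2 ^ n - 1) * ((n - 1).choose k : ℝ))) :
    w 0 = 0 ∧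
    ((n : ℝ) + 1) * w (n - 1) = ((n : ℝ) - 1) * w (n - 2) + 1 ∧
    ∀ k, 1 ≤ k → k ≤ n - 2 →
      ((n : ℝ) + 1) * w k = (k : ℝ) * w (k - 1) + ((n : ℝ) - k - 1) * w (k + 1) + 1 := by
  obtain ⟨m, rfl⟩ : ∃ m, n = m + 2 := ⟨n - 2, by omega⟩
  simp only [show m + 2 - 1 = m + 1 from by omega, show m + 2 - 2 = m from by omega] at hw ⊢
  have hDpos : (0:ℝ) < 2 ^ (m + 2) - 1 := by
    have h1 : (1:ℝ) < 2 ^ (m + 2) := by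
      have h0 : (1:ℝ) ≤ 2 ^ m := one_le_pow₀ (by norm_num)
      calc (1:ℝ) < 2 ^ m * 4 := by nlinarith
      _ = 2 ^ (m + 2) := by ring
    linarith
  have hD : (2:ℝ) ^ (m + 2) - 1 ≠ 0 := ne_of_gt hDpos
  refine ⟨?_, ?_, ?_⟩
  · rw [hw 0 (by omega)]
    have hsum : ∑ i ∈ Finset.Icc (0 + 1) (m + 2), ((m + 2).choose i : ℝ)
        = 2 ^ (m + 2) - 1 := by
      have h0 : ∑ i ∈ Finset.Icc 0 (m + 2), ((m + 2).choose i : ℝ) = 2 ^ (m + 2) := by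
        have hr : Finset.Icc 0 (m + 2) = Finset.range (m + 3) := by
          rw [Finset.range_eq_Ico]; exact (Finset.Ico_add_one_right_eq_Icc 0 (m + 2)).symm
        rw [hr]
        exact_mod_cast congrArg (Nat.cast : ℕ → ℝ) (Nat.sum_range_choose (m + 2))
      have h1 := sum_Icc_choose_split (m + 2) 0 (by omega)
      simp only [Nat.choose_zero_right, Nat.cast_one] at h1
      simp only [Nat.zero_add] at h1 ⊢
      linarith [h1, h0]
    rw [hsum, Nat.choose_zero_right]
    push_cast
    field_simp
    ring
  · rw [hw (m + 1) (by omega), hw m (by omega)]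
    have s1 : ∑ i ∈ Finset.Icc (m + 1 + 1) (m + 2), ((m + 2).choose i : ℝ) = 1 := by
      simp only [show m + 1 + 1 = m + 2 from by omega, Finset.Icc_self,
        Finset.sum_singleton, Nat.choose_self, Nat.cast_one]
    have s2 : ∑ i ∈ Finset.Icc (m + 1) (m + 2), ((m + 2).choose i : ℝ) = (m : ℝ) + 3 := by
      rw [sum_Icc_choose_split _ _ (by omega), s1,
        show (m + 2).choose (m + 1) = m + 2 from Nat.choose_succ_self_right (m + 1)]
      push_cast; ring
    rw [s1, s2, Nat.choose_self,
      show (m + 1).choose m = m + 1 from Nat.choose_succ_self_right m]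
    have hm1 : ((m : ℝ) + 1) ≠ 0 := by positivity
    push_cast
    field_simp
    ring
  · intro k hk1 hk2
    obtain ⟨j, rfl⟩ : ∃ j, k = j + 1 := ⟨k - 1, by omega⟩
    obtain ⟨d, rfl⟩ : ∃ d, m = j + 1 + d := ⟨m - (j + 1), by omega⟩
    simp only [Nat.add_sub_cancel]
    rw [hw (j + 1) (by omega), hw j (by omega), hw (j + 2) (by omega)]
    simp only [show j + 1 + 1 = j + 2 from by omega, show j + 2 + 1 = j + 3 from by omega]
    have e1 : ∑ i ∈ Finset.Icc (j + 1) (j + 1 + d + 2), ((j + 1 + d + 2).choose i : ℝ)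
        = ((j + 1 + d + 2).choose (j + 1) : ℝ)
          + ∑ i ∈ Finset.Icc (j + 2) (j + 1 + d + 2), ((j + 1 + d + 2).choose i : ℝ) := by
      rw [sum_Icc_choose_split _ _ (by omega)]
    have e2 : ∑ i ∈ Finset.Icc (j + 2) (j + 1 + d + 2), ((j + 1 + d + 2).choose i : ℝ)
        = ((j + 1 + d + 2).choose (j + 2) : ℝ)
          + ∑ i ∈ Finset.Icc (j + 3) (j + 1 + d + 2), ((j + 1 + d + 2).choose i : ℝ) := by
      rw [sum_Icc_choose_split _ _ (by omega)]
    rw [e1, e2]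
    -- combinatorial identities
    have hc1 : (((j + 1 + d + 1).choose (j + 1) : ℝ)) * ((j : ℝ) + 1)
        = ((j + 1 + d + 1).choose j : ℝ) * ((d : ℝ) + 2) := by
      have h := Nat.choose_succ_right_eq (j + 1 + d + 1) j
      rw [show j + 1 + d + 1 - j = d + 2 from by omega] at h
      exact_mod_cast congrArg (Nat.cast : ℕ → ℝ) h
    have hc2 : (((j + 1 + d + 1).choose (j + 2) : ℝ)) * ((j : ℝ) + 2)
        = ((j + 1 + d + 1).choose (j + 1) : ℝ) * ((d : ℝ) + 1) := by
      have h := Nat.choose_succ_right_eq (j + 1 + d + 1) (j + 1)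
      rw [show j + 1 + d + 1 - (j + 1) = d + 1 from by omega] at h
      have h' : ((j + 1 + d + 1).choose (j + 1 + 1) : ℝ) * ((j : ℝ) + 1 + 1)
          = ((j + 1 + d + 1).choose (j + 1) : ℝ) * ((d : ℝ) + 1) := by exact_mod_cast h
      rw [show j + 1 + 1 = j + 2 from by omega] at h'
      linarith [h']
    have hA : (((j + 1 + d + 2).choose (j + 2) : ℝ)) * ((j : ℝ) + 2)
        = ((j + 1 + d + 2).choose (j + 1) : ℝ) * ((d : ℝ) + 2) := by
      have h := Nat.choose_succ_right_eq (j + 1 + d + 2) (j + 1)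
      rw [show j + 1 + d + 2 - (j + 1) = d + 2 from by omega] at h
      have h' : ((j + 1 + d + 2).choose (j + 1 + 1) : ℝ) * ((j : ℝ) + 1 + 1)
          = ((j + 1 + d + 2).choose (j + 1) : ℝ) * ((d : ℝ) + 2) := by exact_mod_cast h
      rw [show j + 1 + 1 = j + 2 from by omega] at h'
      linarith [h']
    have hc1pos : (0:ℝ) < ((j + 1 + d + 1).choose (j + 1) : ℝ) := by
      exact_mod_cast Nat.choose_pos (by omega)
    have hc1n : ((j + 1 + d + 1).choose (j + 1) : ℝ) ≠ 0 := ne_of_gt hc1pos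
    have hd2 : ((d : ℝ) + 2) ≠ 0 := by positivity
    have hj2 : ((j : ℝ) + 2) ≠ 0 := by positivity
    have ec0 : ((j + 1 + d + 1).choose j : ℝ)
        = ((j + 1 + d + 1).choose (j + 1) : ℝ) * ((j : ℝ) + 1) / ((d : ℝ) + 2) := by
      field_simp
      linarith [hc1]
    have ec2 : ((j + 1 + d + 1).choose (j + 2) : ℝ)
        = ((j + 1 + d + 1).choose (j + 1) : ℝ) * ((d : ℝ) + 1) / ((j : ℝ) + 2) := by
      field_simp
      linarith [hc2]
    have eA : ((j + 1 + d + 2).choose (j + 2) : ℝ)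
        = ((j + 1 + d + 2).choose (j + 1) : ℝ) * ((d : ℝ) + 2) / ((j : ℝ) + 2) := by
      field_simp
      linarith [hA]
    rw [ec0, ec2, eA]
    push_cast
    field_simp
    ring
end

section
/- For n ≥ 2 and any k with 0 ≤ k ≤ n-1, the quantity u_k = (∑_{i=k+1}^{n} C(n,i)) / (C(n-1,k)·(2^{n+1}−2)) satisfies 0 ≤ u_k ≤ 1/2; consequently the hitting probability w_k = 1/2 − u_k lies in [0, 1/2]. -/
theorem stmt6 (n : ℕ) (hn : 2 ≤ n) (k : ℕ) (hk : k ≤ n - 1) :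
    (0 ≤ (∑ i ∈ Finset.Icc (k + 1) n, (n.choose i : ℝ)) /
        (((n - 1).choose k : ℝ) * (2 ^ (n + 1) - 2)) ∧
      (∑ i ∈ Finset.Icc (k + 1) n, (n.choose i : ℝ)) /
        (((n - 1).choose k : ℝ) * (2 ^ (n + 1) - 2)) ≤ 1/2) ∧
    (0 ≤ 1/2 - (∑ i ∈ Finset.Icc (k + 1) n, (n.choose i : ℝ)) /
        (((n - 1).choose k : ℝ) * (2 ^ (n + 1) - 2)) ∧
      1/2 - (∑ i ∈ Finset.Icc (k + 1) n, (n.choose i : ℝ)) /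
        (((n - 1).choose k : ℝ) * (2 ^ (n + 1) - 2)) ≤ 1/2) := by
  set S : ℝ := ∑ i ∈ Finset.Icc (k + 1) n, (n.choose i : ℝ) with hS
  have hC : 1 ≤ ((n - 1).choose k : ℝ) := by
    exact_mod_cast Nat.choose_pos hk
  have hpow : (2 : ℝ) ≤ 2 ^ n := by
    calc (2 : ℝ) = 2 ^ 1 := by ring
    _ ≤ 2 ^ n := by
      apply pow_le_pow_right₀ (by norm_num) (by omega)
  have hDpos : (0 : ℝ) < ((n - 1).choose k : ℝ) * (2 ^ (n + 1) - 2) := by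
    apply mul_pos (by linarith)
    have : (2 : ℝ) ^ (n + 1) = 2 * 2 ^ n := by ring
    rw [this]; linarith
  have hS0 : 0 ≤ S := Finset.sum_nonneg fun i _ => by positivity
  -- S ≤ 2^n - 1
  have hfull : ∑ i ∈ Finset.range (n + 1), (n.choose i : ℝ) = 2 ^ n := by
    have := Nat.sum_range_choose n
    exact_mod_cast congrArg (Nat.cast : ℕ → ℝ) this
  have hsub : Finset.Icc (k + 1) n ⊆ Finset.range (n + 1) \ {0} := by
    intro i hi
    simp only [Finset.mem_Icc] at hi
    simp only [Finset.mem_sdiff, Finset.mem_range, Finset.mem_singleton]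
    omega
  have hSle : S ≤ 2 ^ n - 1 := by
    have h1 : S ≤ ∑ i ∈ Finset.range (n + 1) \ {0}, (n.choose i : ℝ) :=
      Finset.sum_le_sum_of_subset_of_nonneg hsub (fun i _ _ => by positivity)
    have h2 : ∑ i ∈ Finset.range (n + 1) \ {0}, (n.choose i : ℝ)
        = 2 ^ n - 1 := by
      have h0 : ({0} : Finset ℕ) ⊆ Finset.range (n + 1) := by
        simp
      rw [Finset.sum_sdiff_eq_sub h0, hfull]
      simp
    linarith
  have hu2 : S / (((n - 1).choose k : ℝ) * (2 ^ (n + 1) - 2)) ≤ 1 / 2 := by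
    rw [div_le_iff₀ hDpos]
    have hD2 : 2 * (2 ^ n - 1) ≤ ((n - 1).choose k : ℝ) * (2 ^ (n + 1) - 2) := by
      have h2 : (2 : ℝ) ^ (n + 1) - 2 = 2 * (2 ^ n - 1) := by ring
      rw [h2]
      nlinarith
    nlinarith
  have hu1 : 0 ≤ S / (((n - 1).choose k : ℝ) * (2 ^ (n + 1) - 2)) :=
    div_nonneg hS0 hDpos.le
  exact ⟨⟨hu1, hu2⟩, by linarith, by linarith⟩
end

section
/- For the simple random walk on the n-dimensional hypercube with a = (0,...,0,0) and b = (0,...,0,1), the probability of hitting b before a starting from x = (x_1,...,x_n) equals 1/2 − S/(2(2^n−1)·C(n-1,k)) if x_n = 0 and 1/2 + S/(2(2^n−1)·C(n-1,k)) if x_n = 1, where k = x_1 + ... + x_{n-1} and S = ∑_{i=k+1}^{n} C(n,i). -/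
noncomputable def Sr (n j : ℕ) : ℝ := ∑ i ∈ Finset.Icc (j+1) n, (n.choose i : ℝ)

noncomputable def cr (n j : ℕ) : ℝ := Sr n j / (2 * (2^n - 1) * ((n-1).choose j : ℝ))

lemma Sr_zero (n : ℕ) : Sr n 0 = 2^n - 1 := by
  have h : Finset.range (n+1) = insert 0 (Finset.Icc 1 n) := by
    ext i; simp [Finset.mem_Icc, Finset.mem_range]; omega
  have h2 : (∑ i ∈ Finset.range (n+1), (n.choose i : ℝ)) = 2^n := by
    rw [← Nat.cast_sum]
    norm_cast
    exact Nat.sum_range_choose n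
  rw [h, Finset.sum_insert (by simp)] at h2
  simp only [Nat.choose_zero_right, Nat.cast_one] at h2
  unfold Sr
  simp only [zero_add]
  linarith

lemma Sr_succ (n j : ℕ) (h : j < n) : Sr n j = n.choose (j+1) + Sr n (j+1) := by
  have h1 : Finset.Icc (j+1) n = insert (j+1) (Finset.Icc (j+2) n) := by
    ext i; simp [Finset.mem_Icc]; omega
  unfold Sr
  rw [h1, Finset.sum_insert (by simp)]

lemma two_pow_ne (n : ℕ) (hn : 1 ≤ n) : (2:ℝ)^n - 1 ≠ 0 := by
  have : (2:ℝ)^1 ≤ 2^n := by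
    apply pow_le_pow_right₀ <;> norm_num [hn]
  norm_num at this ⊢; linarith

lemma key (n k : ℕ) (hn : 1 ≤ n) (h1 : 1 ≤ k) (h2 : k ≤ n - 1) :
    ((n:ℝ)+1) * cr n k = k * cr n (k-1) + ((n-1-k : ℕ) : ℝ) * cr n (k+1) := by
  have ht := two_pow_ne n hn
  rcases eq_or_lt_of_le h2 with he | hlt
  · -- k = n - 1
    have hn2 : 2 ≤ n := by omega
    have hS : Sr n (n-1) = 1 := by
      unfold Sr
      have h : Finset.Icc (n-1+1) n = {n} := by ext i; simp [Finset.mem_Icc]; omega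
      rw [h]; simp
    have hS2 : Sr n (n-2) = n + 1 := by
      have h := Sr_succ n (n-2) (by omega)
      have e1 : n - 2 + 1 = n - 1 := by omega
      rw [e1] at h
      have hcn : n.choose (n-1) = n := by
        have e2 : n - 1 = n - 1 := rfl
        calc n.choose (n-1) = n.choose (n - 1) := rfl
          _ = n := by rw [Nat.choose_symm (by omega : 1 ≤ n)]; exact Nat.choose_one_right n
      rw [h, hS, hcn]
    have hC1 : (n-1).choose (n-1) = 1 := Nat.choose_self _
    have hC2 : (n-1).choose (n-2) = n-1 := by
      have e3 : n - 2 = n - 1 - 1 := by omega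
      rw [e3, Nat.choose_symm (by omega : 1 ≤ n - 1), Nat.choose_one_right]
    have h0 : n - 1 - k = 0 := by omega
    have hk1 : k - 1 = n - 2 := by omega
    rw [h0, hk1]
    unfold cr
    rw [hS2, hC2]
    have e4 : Sr n k = 1 := by rw [he]; exact hS
    have e5 : (n-1).choose k = 1 := by rw [he]; exact hC1
    rw [e4, e5]
    have hne : ((n:ℝ) - 1) ≠ 0 := by
      have : (2:ℝ) ≤ n := by exact_mod_cast hn2
      linarith
    have hkr : (k:ℝ) = (n:ℝ) - 1 := by
      rw [he]; push_cast [Nat.cast_sub (by omega : 1 ≤ n)]; ring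
    push_cast [Nat.cast_sub (by omega : 1 ≤ n), Nat.cast_sub (by omega : 2 ≤ n)]
    field_simp
    linear_combination (-((n:ℝ)+1)) * hkr
  · -- k < n - 1, so k + 1 ≤ n - 1
    have hA0 : ((n-1).choose k : ℝ) ≠ 0 := by
      exact_mod_cast Nat.choose_pos (show k ≤ n-1 by omega) |>.ne'
    have hB0 : ((n-1).choose (k-1) : ℝ) ≠ 0 := by
      exact_mod_cast Nat.choose_pos (show k-1 ≤ n-1 by omega) |>.ne'
    have hE0 : ((n-1).choose (k+1) : ℝ) ≠ 0 := by
      exact_mod_cast Nat.choose_pos (show k+1 ≤ n-1 by omega) |>.ne'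
    have hA : (k:ℝ) * (n-1).choose k = ((n:ℝ) - k) * (n-1).choose (k-1) := by
      have := Nat.choose_succ_right_eq (n-1) (k-1)
      rw [Nat.sub_add_cancel h1] at this
      have h' : n - 1 - (k-1) = n - k := by omega
      rw [h'] at this
      have := congrArg (Nat.cast (R := ℝ)) this
      push_cast [Nat.cast_sub (by omega : k ≤ n)] at this
      linarith
    have hE : ((k:ℝ)+1) * (n-1).choose (k+1) = ((n:ℝ) - 1 - k) * (n-1).choose k := by
      have := congrArg (Nat.cast (R := ℝ)) (Nat.choose_succ_right_eq (n-1) k)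
      push_cast [Nat.cast_sub (by omega : k ≤ n - 1), Nat.cast_sub (by omega : 1 ≤ n)] at this
      linarith
    have hC : ((k:ℝ)+1) * n.choose (k+1) = ((n:ℝ) - k) * n.choose k := by
      have := congrArg (Nat.cast (R := ℝ)) (Nat.choose_succ_right_eq n k)
      push_cast [Nat.cast_sub (by omega : k ≤ n)] at this
      linarith
    have hS1 : Sr n (k-1) = n.choose k + Sr n k := by
      have := Sr_succ n (k-1) (by omega)
      rwa [Nat.sub_add_cancel h1] at this
    have hS2 : Sr n k = n.choose (k+1) + Sr n (k+1) := Sr_succ n k (by omega)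
    have hr : ((n - 1 - k : ℕ) : ℝ) = (n:ℝ) - 1 - k := by
      push_cast [Nat.cast_sub (by omega : k ≤ n - 1), Nat.cast_sub (by omega : 1 ≤ n)]
      ring
    unfold cr
    rw [hr, hS1, hS2]
    field_simp
    linear_combination (-(((n-1).choose (k+1) : ℝ) * ((n.choose k : ℝ) + (n.choose (k+1) : ℝ) + Sr n (k+1)))) * hA
      + (((n-1).choose (k-1) : ℝ) * Sr n (k+1)) * hE
      + (((n-1).choose (k-1) : ℝ) * ((n-1).choose (k+1) : ℝ)) * hC

def lastIdx (n : ℕ) (hn : 1 ≤ n) : Fin n := ⟨n-1, Nat.sub_lt hn Nat.one_pos⟩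

def kOf (n : ℕ) (hn : 1 ≤ n) (x : Fin n → Bool) : ℕ :=
  (Finset.univ.filter fun i : Fin n => i ≠ lastIdx n hn ∧ x i = true).card

noncomputable def qf (n : ℕ) (hn : 1 ≤ n) (x : Fin n → Bool) : ℝ :=
  1/2 + (if x (lastIdx n hn) = true then 1 else -1) * cr n (kOf n hn x)

lemma kOf_le (n : ℕ) (hn : 1 ≤ n) (x : Fin n → Bool) : kOf n hn x ≤ n - 1 := by
  have hsub : (Finset.univ.filter fun i : Fin n => i ≠ lastIdx n hn ∧ x i = true)
      ⊆ Finset.univ.erase (lastIdx n hn) := by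
    intro i hi
    simp only [Finset.mem_filter] at hi
    exact Finset.mem_erase.mpr ⟨hi.2.1, Finset.mem_univ i⟩
  have := Finset.card_le_card hsub
  rwa [Finset.card_erase_of_mem (Finset.mem_univ _), Finset.card_univ, Fintype.card_fin] at this

lemma kOf_zero (n : ℕ) (hn : 1 ≤ n) (x : Fin n → Bool) (h : kOf n hn x = 0) :
    (x = fun _ => false) ∨ (x = fun i => decide (i = lastIdx n hn)) := by
  have hall : ∀ i : Fin n, i ≠ lastIdx n hn → x i = false := by
    intro i hi
    by_contra hxi
    have hxi' : x i = true := by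
      cases hxv : x i
      · exact absurd hxv hxi
      · rfl
    have : i ∈ (Finset.univ.filter fun j : Fin n => j ≠ lastIdx n hn ∧ x j = true) := by
      simp [hi, hxi']
    rw [kOf, Finset.card_eq_zero] at h
    rw [h] at this
    exact absurd this (Finset.notMem_empty i)
  cases hxl : x (lastIdx n hn)
  · left
    funext i
    by_cases hi : i = lastIdx n hn
    · rw [hi]; exact hxl
    · exact hall i hi
  · right
    funext i
    by_cases hi : i = lastIdx n hn
    · rw [hi]; simp [hxl]
    · simp [hi, hall i hi]

lemma kOf_update_last (n : ℕ) (hn : 1 ≤ n) (x : Fin n → Bool) (v : Bool) :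
    kOf n hn (Function.update x (lastIdx n hn) v) = kOf n hn x := by
  unfold kOf
  congr 1
  apply Finset.filter_congr
  intro i _
  by_cases hi : i = lastIdx n hn
  · simp [hi]
  · simp [hi, Function.update_of_ne hi]

lemma kOf_update_true (n : ℕ) (hn : 1 ≤ n) (x : Fin n → Bool) (i : Fin n)
    (hiL : i ≠ lastIdx n hn) (hi : x i = true) :
    kOf n hn (Function.update x i false) = kOf n hn x - 1 := by
  unfold kOf
  have h : (Finset.univ.filter fun j : Fin n => j ≠ lastIdx n hn ∧ (Function.update x i false) j = true)
      = (Finset.univ.filter fun j : Fin n => j ≠ lastIdx n hn ∧ x j = true).erase i := by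
    ext j
    by_cases hj : j = i
    · subst hj; simp
    · simp [Finset.mem_erase, hj, Function.update_of_ne hj]
  rw [h, Finset.card_erase_of_mem (by simp [hiL, hi])]

lemma kOf_update_false (n : ℕ) (hn : 1 ≤ n) (x : Fin n → Bool) (i : Fin n)
    (hiL : i ≠ lastIdx n hn) (hi : x i = false) :
    kOf n hn (Function.update x i true) = kOf n hn x + 1 := by
  unfold kOf
  have h : (Finset.univ.filter fun j : Fin n => j ≠ lastIdx n hn ∧ (Function.update x i true) j = true)
      = insert i (Finset.univ.filter fun j : Fin n => j ≠ lastIdx n hn ∧ x j = true) := by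
    ext j
    by_cases hj : j = i
    · subst hj; simp [hiL]
    · simp [Finset.mem_insert, hj, Function.update_of_ne hj]
  rw [h, Finset.card_insert_of_notMem (by simp [hi])]

lemma cr_zero (n : ℕ) (hn : 1 ≤ n) : cr n 0 = 1/2 := by
  unfold cr
  rw [Sr_zero, Nat.choose_zero_right]
  have := two_pow_ne n hn
  push_cast
  field_simp

lemma kOf_a (n : ℕ) (hn : 1 ≤ n) : kOf n hn (fun _ => false) = 0 := by
  unfold kOf
  rw [Finset.card_eq_zero]
  ext i; simp

lemma kOf_b (n : ℕ) (hn : 1 ≤ n) : kOf n hn (fun i => decide (i = lastIdx n hn)) = 0 := by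
  unfold kOf
  rw [Finset.card_eq_zero]
  ext i; simp

lemma qf_a (n : ℕ) (hn : 1 ≤ n) : qf n hn (fun _ => false) = 0 := by
  unfold qf
  rw [kOf_a, cr_zero n hn]
  norm_num

lemma qf_b (n : ℕ) (hn : 1 ≤ n) : qf n hn (fun i => decide (i = lastIdx n hn)) = 1 := by
  unfold qf
  rw [kOf_b, cr_zero n hn]
  norm_num

lemma qf_harm (n : ℕ) (hn : 1 ≤ n) (x : Fin n → Bool)
    (hxa : x ≠ fun _ => false) (hxb : x ≠ fun i => decide (i = lastIdx n hn)) :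
    (n : ℝ) * qf n hn x = ∑ i : Fin n, qf n hn (Function.update x i (!(x i))) := by
  set L := lastIdx n hn with hL
  have hk1 : 1 ≤ kOf n hn x := by
    rcases Nat.eq_zero_or_pos (kOf n hn x) with h | h
    · rcases kOf_zero n hn x h with h' | h'
      · exact absurd h' hxa
      · exact absurd h' hxb
    · exact h
  have hk2 := kOf_le n hn x
  set k := kOf n hn x with hkdef
  rw [show (∑ i : Fin n, qf n hn (Function.update x i (!(x i)))) =
      qf n hn (Function.update x L (!(x L))) +
        ∑ i ∈ Finset.univ.erase L, qf n hn (Function.update x i (!(x i))) from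
    (Finset.add_sum_erase _ _ (Finset.mem_univ L)).symm]
  have hLterm : qf n hn (Function.update x L (!(x L))) =
      1/2 + (if x L = true then (-1:ℝ) else 1) * cr n k := by
    unfold qf
    rw [kOf_update_last, Function.update_self]
    cases hxL : x L <;> simp [hxL, ← hkdef]
  have hterm : ∀ i ∈ Finset.univ.erase L, qf n hn (Function.update x i (!(x i))) =
      1/2 + (if x L = true then (1:ℝ) else -1) *
        (if x i = true then cr n (k-1) else cr n (k+1)) := by
    intro i hi
    have hiL : i ≠ L := (Finset.mem_erase.mp hi).1
    unfold qf
    rw [← hL, Function.update_of_ne (Ne.symm hiL)]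
    cases hxi : x i
    · rw [show (!false) = true from rfl, kOf_update_false n hn x i hiL hxi]
      simp [← hkdef]
    · rw [show (!true) = false from rfl, kOf_update_true n hn x i hiL hxi]
      simp [← hkdef]
  rw [Finset.sum_congr rfl hterm, hLterm]
  rw [← Finset.sum_filter_add_sum_filter_not (Finset.univ.erase L) (fun i => x i = true)]
  have hsetT : Finset.filter (fun i => x i = true) (Finset.univ.erase L) =
      Finset.univ.filter (fun i => i ≠ L ∧ x i = true) := by
    ext i; simp [Finset.mem_erase]
  have hcT : (Finset.filter (fun i => x i = true) (Finset.univ.erase L)).card = k := by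
    rw [hsetT]; rw [hkdef]; rfl
  have hcF : (Finset.filter (fun i => ¬ x i = true) (Finset.univ.erase L)).card = n - 1 - k := by
    have htot := Finset.card_filter_add_card_filter_not
      (s := Finset.univ.erase L) (p := fun i => x i = true)
    rw [hcT, Finset.card_erase_of_mem (Finset.mem_univ _), Finset.card_univ,
      Fintype.card_fin] at htot
    omega
  rw [Finset.sum_congr rfl (fun i hi => by
        rw [if_pos (Finset.mem_filter.mp hi).2] :
      ∀ i ∈ Finset.filter (fun i => x i = true) (Finset.univ.erase L),
        (1/2 + (if x L = true then (1:ℝ) else -1) *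
          (if x i = true then cr n (k-1) else cr n (k+1))) =
        1/2 + (if x L = true then (1:ℝ) else -1) * cr n (k-1))]
  rw [Finset.sum_congr rfl (fun i hi => by
        rw [if_neg (Finset.mem_filter.mp hi).2] :
      ∀ i ∈ Finset.filter (fun i => ¬ x i = true) (Finset.univ.erase L),
        (1/2 + (if x L = true then (1:ℝ) else -1) *
          (if x i = true then cr n (k-1) else cr n (k+1))) =
        1/2 + (if x L = true then (1:ℝ) else -1) * cr n (k+1))]
  rw [Finset.sum_const, Finset.sum_const, hcT, hcF, nsmul_eq_mul, nsmul_eq_mul]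
  have hkey := key n k hn hk1 hk2
  have hcast : ((n - 1 - k : ℕ) : ℝ) = (n:ℝ) - 1 - k := by
    push_cast [Nat.cast_sub (by omega : k ≤ n - 1), Nat.cast_sub (by omega : 1 ≤ n)]
    ring
  rw [hcast] at hkey ⊢
  unfold qf
  rw [← hkdef, ← hL]
  cases hxL : x L <;> norm_num <;> nlinarith [hkey]

def cnt (n : ℕ) (x : Fin n → Bool) : ℕ := (Finset.univ.filter fun i => x i = true).card

lemma cnt_update (n : ℕ) (x : Fin n → Bool) (i : Fin n) (hi : x i = true) :
    cnt n (Function.update x i false) = cnt n x - 1 := by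
  unfold cnt
  have h : (Finset.univ.filter fun j : Fin n => (Function.update x i false) j = true)
      = (Finset.univ.filter fun j : Fin n => x j = true).erase i := by
    ext j
    by_cases hj : j = i
    · subst hj; simp
    · simp [Finset.mem_erase, hj, Function.update_of_ne hj]
  rw [h, Finset.card_erase_of_mem (by simp [hi])]

lemma maxp (n : ℕ) (hn : 1 ≤ n) (a b : Fin n → Bool) (ha : a = fun _ => false)
    (h : (Fin n → Bool) → ℝ) (h0 : h a = 0) (h1 : h b = 0)
    (hh : ∀ x, x ≠ a → x ≠ b → (n:ℝ) * h x = ∑ i : Fin n, h (Function.update x i (!(x i)))) :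
    ∀ x, h x ≤ 0 := by
  have claim : ∀ m : ℕ, ∀ x : Fin n → Bool, cnt n x ≤ m → (∀ y, h y ≤ h x) → h x ≤ 0 := by
    intro m
    induction m with
    | zero =>
      intro x hc hm
      by_cases hxa : x = a
      · rw [hxa, h0]
      · exfalso
        have hex : ∃ i, x i = true := by
          by_contra hcon
          push_neg at hcon
          apply hxa
          funext i
          rw [ha]
          cases hxv : x i
          · rfl
          · exact absurd hxv (hcon i)
        obtain ⟨i, hi⟩ := hex
        have : i ∈ (Finset.univ.filter fun j : Fin n => x j = true) := by simp [hi]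
        have hpos : 0 < cnt n x := Finset.card_pos.mpr ⟨i, this⟩
        omega
    | succ m ih =>
      intro x hc hm
      by_cases hxa : x = a
      · rw [hxa, h0]
      by_cases hxb : x = b
      · rw [hxb, h1]
      have hsum := hh x hxa hxb
      have hall : ∀ i, h (Function.update x i (!(x i))) = h x := by
        by_contra hcon
        push_neg at hcon
        obtain ⟨j, hj⟩ := hcon
        have hstrict : (∑ i : Fin n, h (Function.update x i (!(x i)))) <
            ∑ _i : Fin n, h x :=
          Finset.sum_lt_sum (fun i _ => hm _)
            ⟨j, Finset.mem_univ j, lt_of_le_of_ne (hm _) hj⟩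
        rw [Finset.sum_const, Finset.card_univ, Fintype.card_fin, nsmul_eq_mul] at hstrict
        linarith
      have hex : ∃ i, x i = true := by
        by_contra hcon
        push_neg at hcon
        apply hxa
        funext i
        rw [ha]
        cases hxv : x i
        · rfl
        · exact absurd hxv (hcon i)
      obtain ⟨i, hi⟩ := hex
      have heq : h (Function.update x i false) = h x := by
        have := hall i
        rw [hi] at this
        exact this
      have hcnt : cnt n (Function.update x i false) ≤ m := by
        rw [cnt_update n x i hi]
        have : 1 ≤ cnt n x := by
          have : i ∈ (Finset.univ.filter fun j : Fin n => x j = true) := by simp [hi]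
          exact Finset.card_pos.mpr ⟨i, this⟩
        omega
      have hm' : ∀ y, h y ≤ h (Function.update x i false) := fun y => (hm y).trans heq.symm.le
      have := ih (Function.update x i false) hcnt hm'
      linarith [heq]
  obtain ⟨z, hz⟩ := Finite.exists_max h
  intro x
  exact (hz x).trans (claim (cnt n z) z le_rfl hz)

/-- Theorem 1 of the paper: for the simple random walk on the hypercube with
`a = (0,…,0,0)` and `b = (0,…,0,1)`, the hitting probability of `b` before `a`
(characterized as the unique function with `p a = 0`, `p b = 1`, harmonic elsewhere)
is given by the explicit formula. Here `k` is the sum of the first `n-1` coordinates. -/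
theorem stmt9 (n : ℕ) (hn : 1 ≤ n)
    (a b : Fin n → Bool)
    (ha : a = fun _ => false)
    (hb : b = fun i => decide (i = (⟨n - 1, by omega⟩ : Fin n)))
    (p : (Fin n → Bool) → ℝ)
    (hpa : p a = 0) (hpb : p b = 1)
    (hharm : ∀ x, x ≠ a → x ≠ b →
      (n : ℝ) * p x = ∑ i : Fin n, p (Function.update x i (!(x i))))
    (x : Fin n → Bool)
    (k : ℕ)
    (hk : k = (Finset.univ.filter fun i : Fin n =>
      i ≠ (⟨n - 1, by omega⟩ : Fin n) ∧ x i = true).card) :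
    (x (⟨n - 1, by omega⟩ : Fin n) = false →
      p x = 1/2 - (∑ i ∈ Finset.Icc (k + 1) n, (n.choose i : ℝ)) /
        (2 * (2 ^ n - 1) * ((n - 1).choose k : ℝ))) ∧
    (x (⟨n - 1, by omega⟩ : Fin n) = true →
      p x = 1/2 + (∑ i ∈ Finset.Icc (k + 1) n, (n.choose i : ℝ)) /
        (2 * (2 ^ n - 1) * ((n - 1).choose k : ℝ))) := by
  have hb' : b = fun i => decide (i = lastIdx n hn) := by rw [hb]; rfl
  have hQa : qf n hn a = 0 := by rw [ha]; exact qf_a n hn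
  have hQb : qf n hn b = 1 := by rw [hb']; exact qf_b n hn
  have hQh : ∀ y, y ≠ a → y ≠ b →
      (n:ℝ) * qf n hn y = ∑ i : Fin n, qf n hn (Function.update y i (!(y i))) := by
    intro y hya hyb
    exact qf_harm n hn y (by rw [← ha]; exact hya) (by rw [← hb']; exact hyb)
  have hpq : ∀ y, p y = qf n hn y := by
    have hd : ∀ y, y ≠ a → y ≠ b →
        (n:ℝ) * (p y - qf n hn y) =
          ∑ i : Fin n, (p (Function.update y i (!(y i))) - qf n hn (Function.update y i (!(y i)))) := by
      intro y hya hyb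
      have h1 := hharm y hya hyb
      have h2 := hQh y hya hyb
      rw [Finset.sum_sub_distrib]
      ring_nf
      ring_nf at h1 h2
      linarith
    have hd' : ∀ y, y ≠ a → y ≠ b →
        (n:ℝ) * (qf n hn y - p y) =
          ∑ i : Fin n, (qf n hn (Function.update y i (!(y i))) - p (Function.update y i (!(y i)))) := by
      intro y hya hyb
      have h1 := hd y hya hyb
      rw [Finset.sum_sub_distrib] at h1 ⊢
      linarith
    have hmax1 := maxp n hn a b ha (fun y => p y - qf n hn y)
      (by simp [hpa, hQa]) (by simp [hpb, hQb]) hd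
    have hmax2 := maxp n hn a b ha (fun y => qf n hn y - p y)
      (by simp [hpa, hQa]) (by simp [hpb, hQb]) hd'
    intro y
    have := hmax1 y
    have := hmax2 y
    simp at *
    linarith
  have hkk : k = kOf n hn x := hk
  constructor
  · intro hxL
    have hxL' : x (lastIdx n hn) = false := hxL
    rw [hpq x]
    unfold qf
    rw [← hkk, hxL']
    norm_num
    unfold cr Sr
    ring
  · intro hxL
    have hxL' : x (lastIdx n hn) = true := hxL
    rw [hpq x]
    unfold qf
    rw [← hkk, hxL']
    norm_num
    unfold cr Sr
    ring
end

section
/- The sequence u_k = (∑_{i=k+1}^{n} C(n,i))/(C(n-1,k)·(2^{n+1}−2)), for 0 ≤ k ≤ n-1, is strictly decreasing in k. -/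
lemma term_le (n k i : ℕ) (hk : k + 1 ≤ n - 1) (hi1 : k + 1 ≤ i) (hi2 : i ≤ n - 1) :
    n.choose (i + 1) * (n - 1).choose k ≤ n.choose i * (n - 1).choose (k + 1) := by
  have hpos : 0 < (i + 1) * (k + 1) := by positivity
  apply Nat.le_of_mul_le_mul_right _ hpos
  have h1 : n.choose (i + 1) * (i + 1) = n.choose i * (n - i) :=
    Nat.choose_succ_right_eq n i
  have h2 : (n - 1).choose (k + 1) * (k + 1) = (n - 1).choose k * (n - 1 - k) :=
    Nat.choose_succ_right_eq (n - 1) k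
  calc n.choose (i + 1) * (n - 1).choose k * ((i + 1) * (k + 1))
      = (n.choose (i + 1) * (i + 1)) * ((n - 1).choose k * (k + 1)) := by ring
    _ = n.choose i * (n - 1).choose k * ((n - i) * (k + 1)) := by rw [h1]; ring
    _ ≤ n.choose i * (n - 1).choose k * ((n - 1 - k) * (i + 1)) := by
        apply Nat.mul_le_mul_left
        exact Nat.mul_le_mul (by omega) (by omega)
    _ = (n.choose i * (i + 1)) * ((n - 1).choose k * (n - 1 - k)) := by ring
    _ = n.choose i * (n - 1).choose (k + 1) * ((i + 1) * (k + 1)) := by rw [← h2]; ring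

lemma keyNat (n k : ℕ) (hn : 2 ≤ n) (hk : k + 1 ≤ n - 1) :
    (∑ i ∈ Finset.Icc (k + 2) n, n.choose i) * (n - 1).choose k
      < (∑ i ∈ Finset.Icc (k + 1) n, n.choose i) * (n - 1).choose (k + 1) := by
  rw [Finset.sum_mul, Finset.sum_mul]
  have hshift : Finset.Icc (k + 2) n = (Finset.Icc (k + 1) (n - 1)).map
      (addRightEmbedding 1) := by
    rw [Finset.map_add_right_Icc]
    congr 1
    omega
  rw [hshift, Finset.sum_map]
  simp only [addRightEmbedding_apply]
  have hn' : n = (n - 1) + 1 := by omega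
  rw [hn', show Finset.Icc (k+1) (n-1+1) = Finset.Icc (k+1) ((n-1)+1) from rfl,
    Finset.sum_Icc_succ_top (by omega : k + 1 ≤ n - 1 + 1)]
  rw [← hn']
  have hle : ∑ i ∈ Finset.Icc (k + 1) (n - 1), n.choose (i + 1) * (n - 1).choose k
      ≤ ∑ i ∈ Finset.Icc (k + 1) (n - 1), n.choose i * (n - 1).choose (k + 1) := by
    apply Finset.sum_le_sum
    intro i hi
    rw [Finset.mem_Icc] at hi
    exact term_le n k i hk hi.1 hi.2
  have hpos : 0 < n.choose n * (n - 1).choose (k + 1) := by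
    apply Nat.mul_pos (Nat.choose_pos le_rfl) (Nat.choose_pos (by omega))
  omega

theorem stmt13 (n : ℕ) (hn : 2 ≤ n) (u : ℕ → ℝ)
    (hu : ∀ k, k ≤ n - 1 →
      u k = (∑ i ∈ Finset.Icc (k + 1) n, (n.choose i : ℝ)) /
        (((n - 1).choose k : ℝ) * (2 ^ (n + 1) - 2))) :
    ∀ k j, k < j → j ≤ n - 1 → u j < u k := by
  have hD : (0 : ℝ) < 2 ^ (n + 1) - 2 := by
    have : (2 : ℝ) ^ 1 < 2 ^ (n + 1) := by
      apply pow_lt_pow_right₀ (by norm_num) (by omega)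
    simpa using by linarith
  have key : ∀ k, k + 1 ≤ n - 1 → u (k + 1) < u k := by
    intro k hk
    rw [hu k (by omega), hu (k + 1) hk]
    have hc1 : (0 : ℝ) < ((n - 1).choose k : ℝ) :=
      Nat.cast_pos.mpr (Nat.choose_pos (by omega))
    have hc2 : (0 : ℝ) < ((n - 1).choose (k + 1) : ℝ) :=
      Nat.cast_pos.mpr (Nat.choose_pos (by omega))
    rw [div_lt_div_iff₀ (by positivity) (by positivity)]
    have hnat := keyNat n k hn hk
    have hcast : (∑ i ∈ Finset.Icc (k + 1 + 1) n, (n.choose i : ℝ)) * ((n - 1).choose k : ℝ)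
        < (∑ i ∈ Finset.Icc (k + 1) n, (n.choose i : ℝ)) * ((n - 1).choose (k + 1) : ℝ) := by
      have := hnat
      push_cast
      exact_mod_cast this
    nlinarith [hcast, hD, Finset.sum_nonneg (fun i _ => Nat.cast_nonneg (n.choose i) : ∀ i ∈ Finset.Icc (k+1+1) n, (0:ℝ) ≤ (n.choose i : ℝ))]
  intro k j hkj hj
  induction j with
  | zero => omega
  | succ m ih =>
    rcases Nat.lt_succ_iff_lt_or_eq.mp hkj with h | h
    · exact lt_trans (key m hj) (ih h (by omega))
    · subst h; exact key k hj
end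

section
/- If u_0, ..., u_n satisfy u_0 = 1/2, u_n = 0 and (n+1)·u_k = k·u_{k-1} + (n-k-1)·u_{k+1} for 1 ≤ k ≤ n-1, then u_{n-1} = 1/(2^{n+1} − 2). -/
theorem stmt16 (n : ℕ) (hn : 2 ≤ n) (u : ℕ → ℝ)
    (h0 : u 0 = 1/2) (hend : u n = 0)
    (hrec : ∀ k, 1 ≤ k → k ≤ n - 1 →
      ((n : ℝ) + 1) * u k = (k : ℝ) * u (k - 1) + ((n : ℝ) - k - 1) * u (k + 1)) :
    u (n - 1) = 1 / (2 ^ (n + 1) - 2) := by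
  set W : ℕ → ℝ := fun k => (2:ℝ)^n - ∑ j ∈ Finset.range (k+1), (n.choose j : ℝ) with hWdef
  have hWstep : ∀ k, W k = W (k+1) + (n.choose (k+1) : ℝ) := by
    intro k
    simp only [hWdef, Finset.sum_range_succ]
    ring
  have hsum : ∑ j ∈ Finset.range (n+1), (n.choose j : ℝ) = 2^n := by
    rw [← Nat.cast_sum, Nat.sum_range_choose]
    push_cast; ring
  have hWtop : W (n-1) = 1 := by
    have h1 : n - 1 + 1 = n := by omega
    have h3 := Finset.sum_range_succ (fun j => (n.choose j : ℝ)) n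
    rw [hsum] at h3
    simp only [Nat.choose_self, Nat.cast_one] at h3
    simp only [hWdef, h1]
    linarith
  have key : ∀ d k, k + d = n - 1 →
      (((n-1).choose k : ℝ)) * u k = W k * u (n-1) := by
    intro d
    induction d using Nat.strong_induction_on with
    | _ d ih =>
      match d, ih with
      | 0, _ =>
        intro k hk
        have hk' : k = n - 1 := by omega
        subst hk'
        rw [Nat.choose_self, hWtop]
        push_cast; ring
      | 1, _ =>
        intro k hk
        -- k = n - 2, recurrence at k+1 = n-1
        have hn' : n = k + 2 := by omega
        have hr := hrec (k+1) (by omega) (by omega)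
        have e1 : (k : ℕ) + 1 - 1 = k := by omega
        have e2 : k + 1 + 1 = n := by omega
        rw [e1, e2, hend] at hr
        have hB : (n-1).choose k = k + 1 := by
          have : n - 1 = k + 1 := by omega
          rw [this, ← Nat.choose_symm (Nat.le_succ k)]
          have h4 : k + 1 - k = 1 := by omega
          rw [h4, Nat.choose_one_right]
        have hch : n.choose (k+1) = n := by
          rw [hn']; exact Nat.choose_succ_self_right (k+1)
        have hW2 : W k = W (k+1) + (n.choose (k+1) : ℝ) := hWstep k
        rw [hch] at hW2
        have hk1 : k + 1 = n - 1 := by omega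
        rw [hk1, hWtop] at hW2
        rw [hB, hW2, ← hk1]
        push_cast [hn'] at hr ⊢
        linarith
      | (d+2), ih =>
        intro k hk
        have hn' : n = k + d + 3 := by omega
        have hn1 : n - 1 = k + d + 2 := by omega
        have hr := hrec (k+1) (by omega) (by omega)
        have e1 : (k : ℕ) + 1 - 1 = k := by omega
        rw [e1] at hr
        have hcoef : ((n:ℝ) - (↑(k+1):ℝ) - 1) = (d:ℝ) + 1 := by push_cast [hn']; ring
        rw [hcoef] at hr
        have h2 := ih (d+1) (by omega) (k+1) (by omega)
        have h3 := ih d (by omega) (k+2) (by omega)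
        have c1n := Nat.choose_succ_right_eq (k+d+2) k
        have c2n := Nat.choose_succ_right_eq (k+d+2) (k+1)
        have c3n := Nat.choose_succ_right_eq (k+d+3) (k+1)
        have s1 : k + d + 2 - k = d + 2 := by omega
        have s2 : k + d + 2 - (k+1) = d + 1 := by omega
        have s3 : k + d + 3 - (k+1) = d + 2 := by omega
        rw [s1] at c1n
        rw [s2] at c2n
        rw [s3] at c3n
        have c1 : ((k+d+2).choose (k+1) : ℝ) * ((k:ℝ)+1) = ((k+d+2).choose k : ℝ) * ((d:ℝ)+2) := by
          exact_mod_cast congrArg (Nat.cast : ℕ → ℝ) c1n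
        have c2 : ((k+d+2).choose (k+2) : ℝ) * ((k:ℝ)+2) = ((k+d+2).choose (k+1) : ℝ) * ((d:ℝ)+1) := by
          have := congrArg (Nat.cast : ℕ → ℝ) c2n
          push_cast at this
          convert this using 2 <;> push_cast <;> ring_nf
        have c3 : ((k+d+3).choose (k+2) : ℝ) * ((k:ℝ)+2) = ((k+d+3).choose (k+1) : ℝ) * ((d:ℝ)+2) := by
          have := congrArg (Nat.cast : ℕ → ℝ) c3n
          push_cast at this
          convert this using 2 <;> push_cast <;> ring_nf
        have w1 : W k = W (k+1) + (n.choose (k+1) : ℝ) := hWstep k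
        have w2 : W (k+1) = W (k+2) + (n.choose (k+2) : ℝ) := hWstep (k+1)
        rw [hn1] at h2 h3 ⊢
        rw [hn'] at w1 w2 hr
        push_cast at hr h2 h3 ⊢
        have hne : ((k:ℝ)+1) * ((d:ℝ)+1) * ((d:ℝ)+2) ≠ 0 := by positivity
        refine mul_left_cancel₀ hne ?_
        linear_combination
          (((k:ℝ)+(d:ℝ)+4)*((d:ℝ)+1)*((k:ℝ)+1)) * h2
          + (-(((d:ℝ)+1)*((k:ℝ)+1)*((k:ℝ)+2))) * h3
          + ((((d:ℝ)+1)^2 * u (k+2) - ((k:ℝ)+(d:ℝ)+4)*((d:ℝ)+1)*u (k+1))) * c1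
          + (((d:ℝ)+1)*((k:ℝ)+1)* u (k+2)) * c2
          + (-(((d:ℝ)+1)*((d:ℝ)+2)*(((k+d+2).choose k : ℝ)))) * hr
          + (-(((k:ℝ)+1)*((d:ℝ)+1)*((d:ℝ)+2)* u (k+d+2))) * w1
          + (((k:ℝ)+1)*((d:ℝ)+1)*((k:ℝ)+2)* u (k+d+2)) * w2
          + (((k:ℝ)+1)*((d:ℝ)+1)* u (k+d+2)) * c3
  have final := key (n-1) 0 (by omega)
  rw [Nat.choose_zero_right, h0] at final
  have hW0 : W 0 = 2^n - 1 := by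
    simp [hWdef]
  rw [hW0] at final
  have h2n : (1:ℝ) < 2^n := by
    have : (2:ℝ)^2 ≤ 2^n := pow_le_pow_right₀ (by norm_num) hn
    norm_num at this; linarith
  have h2n' : (2:ℝ)^(n+1) - 2 = 2 * ((2:ℝ)^n - 1) := by rw [pow_succ]; ring
  rw [h2n']
  have hne : (2:ℝ)^n - 1 ≠ 0 := by linarith
  field_simp at final ⊢
  push_cast at final
  linarith
end
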